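/- The eight polynomials a2_0, a3_0, a4_0, b2_0, b3_0, b4_0, b5_0, b6_0 in the polynomial ring ℂ[w1, w2, w3, w4, w5, w6, w7, w8] are algebraically independent over ℂ. -/
import Mathlib

noncomputable section

namespace E8JacobiQ0

open MvPolynomial

/-- The polynomial ring `ℂ[w1, ..., w8]`; the variable `wⱼ` is `X (j-1)`. -/
abbrev Cw : Type := MvPolynomial (Fin 8) ℂ

def w1 : Cw := X 0
def w2 : Cw := X 1
def w3 : Cw := X 2
def w4 : Cw := X 3
def w5 : Cw := X 4
def w6 : Cw := X 5
def w7 : Cw := X 6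
def w8 : Cw := X 7

def a2_0 : Cw := C (-(2/3) : ℂ) * w1 + 12 * w8 - 1440
def a3_0 : Cw := -2 * w2 + 96 * w1 - 1152 * w8 + 103680
def a4_0 : Cw := C ((4/3) : ℂ) * w1^2 - 4 * w3 - 16 * w6 - 48 * w1 * w8
  - 144 * w8^2 + 400 * w2 + 1440 * w7 + 1728 * w1 + 41472 * w8 - 2073600
def b2_0 : Cw := C (-(1/18) : ℂ) * w1 - 3 * w8 + 840
def b3_0 : Cw := C (-(1/6) : ℂ) * w2 - 4 * w7 - 8 * w1 + 528 * w8 - 79680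
def b4_0 : Cw := C ((2/9) : ℂ) * w1^2 - C ((1/3) : ℂ) * w3 - C ((16/3) : ℂ) * w6
  - 24 * w1 * w8 - 120 * w8^2 + C ((424/3) : ℂ) * w2 + 1272 * w7 + 4608 * w1
  - 25920 * w8 + 3939840
def b5_0 : Cw := C ((2/3) : ℂ) * w1 * w2 - 4 * w5 - 16 * w1 * w7 + 64 * w2 * w8
  + 288 * w7 * w8 - 96 * w1^2 - 60 * w3 - 160 * w6 + 3456 * w8^2 + 800 * w2
  - 24480 * w7 - 108480 * w1 + 933120 * w8 - 97873920
def b6_0 : Cw := C (-(8/27) : ℂ) * w1^3 + w2^2 + C ((4/3) : ℂ) * w1 * w3 - 4 * w4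
  - C ((32/3) : ℂ) * w1 * w6 - 48 * w1^2 * w8 + 48 * w2 * w7 + 288 * w7^2
  - 40 * w3 * w8 - 480 * w6 * w8 - 2592 * w1 * w8^2 - 9792 * w8^3
  + C ((1124/3) : ℂ) * w1 * w2 + 548 * w5 + 6688 * w1 * w7 + 1884 * w2 * w8
  + 25632 * w7 * w8 + 24576 * w1^2 + 12920 * w3 + 88320 * w6
  + 578688 * w1 * w8 + 1714176 * w8^2 - 1694400 * w2 - 8460000 * w7
  - 30102720 * w1 - 104198400 * w8 + 721612800

lemma hu : (3456 : Cw) * C ((1/3456 : ℂ)) = 1 := by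
  rw [← map_ofNat (C : ℂ →+* Cw) 3456, ← C_mul]
  norm_num

lemma hc_1_48 : C ((1/48 : ℂ)) = (72 : Cw) * C ((1/3456 : ℂ)) := by
  rw [show ((1/48 : ℂ)) = (72 : ℂ) * (1/3456) by norm_num, C_mul, map_ofNat]

lemma hc_1_32 : C ((1/32 : ℂ)) = (108 : Cw) * C ((1/3456 : ℂ)) := by
  rw [show ((1/32 : ℂ)) = (108 : ℂ) * (1/3456) by norm_num, C_mul, map_ofNat]

lemma hc_5_96 : C ((5/96 : ℂ)) = (180 : Cw) * C ((1/3456 : ℂ)) := by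
  rw [show ((5/96 : ℂ)) = (180 : ℂ) * (1/3456) by norm_num, C_mul, map_ofNat]

lemma hc_1_18 : C ((1/18 : ℂ)) = (192 : Cw) * C ((1/3456 : ℂ)) := by
  rw [show ((1/18 : ℂ)) = (192 : ℂ) * (1/3456) by norm_num, C_mul, map_ofNat]

lemma hc_31_384 : C ((31/384 : ℂ)) = (279 : Cw) * C ((1/3456 : ℂ)) := by
  rw [show ((31/384 : ℂ)) = (279 : ℂ) * (1/3456) by norm_num, C_mul, map_ofNat]

lemma hc_1_8 : C ((1/8 : ℂ)) = (432 : Cw) * C ((1/3456 : ℂ)) := by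
  rw [show ((1/8 : ℂ)) = (432 : ℂ) * (1/3456) by norm_num, C_mul, map_ofNat]

lemma hc_9_64 : C ((9/64 : ℂ)) = (486 : Cw) * C ((1/3456 : ℂ)) := by
  rw [show ((9/64 : ℂ)) = (486 : ℂ) * (1/3456) by norm_num, C_mul, map_ofNat]

lemma hc_1_6 : C ((1/6 : ℂ)) = (576 : Cw) * C ((1/3456 : ℂ)) := by
  rw [show ((1/6 : ℂ)) = (576 : ℂ) * (1/3456) by norm_num, C_mul, map_ofNat]

lemma hc_59_288 : C ((59/288 : ℂ)) = (708 : Cw) * C ((1/3456 : ℂ)) := by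
  rw [show ((59/288 : ℂ)) = (708 : ℂ) * (1/3456) by norm_num, C_mul, map_ofNat]

lemma hc_2_9 : C ((2/9 : ℂ)) = (768 : Cw) * C ((1/3456 : ℂ)) := by
  rw [show ((2/9 : ℂ)) = (768 : ℂ) * (1/3456) by norm_num, C_mul, map_ofNat]

lemma hc_1_4 : C ((1/4 : ℂ)) = (864 : Cw) * C ((1/3456 : ℂ)) := by
  rw [show ((1/4 : ℂ)) = (864 : ℂ) * (1/3456) by norm_num, C_mul, map_ofNat]

lemma hc_8_27 : C ((8/27 : ℂ)) = (1024 : Cw) * C ((1/3456 : ℂ)) := by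
  rw [show ((8/27 : ℂ)) = (1024 : ℂ) * (1/3456) by norm_num, C_mul, map_ofNat]

lemma hc_1_3 : C ((1/3 : ℂ)) = (1152 : Cw) * C ((1/3456 : ℂ)) := by
  rw [show ((1/3 : ℂ)) = (1152 : ℂ) * (1/3456) by norm_num, C_mul, map_ofNat]

lemma hc_3_8 : C ((3/8 : ℂ)) = (1296 : Cw) * C ((1/3456 : ℂ)) := by
  rw [show ((3/8 : ℂ)) = (1296 : ℂ) * (1/3456) by norm_num, C_mul, map_ofNat]

lemma hc_1_2 : C ((1/2 : ℂ)) = (1728 : Cw) * C ((1/3456 : ℂ)) := by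
  rw [show ((1/2 : ℂ)) = (1728 : ℂ) * (1/3456) by norm_num, C_mul, map_ofNat]

lemma hc_13_24 : C ((13/24 : ℂ)) = (1872 : Cw) * C ((1/3456 : ℂ)) := by
  rw [show ((13/24 : ℂ)) = (1872 : ℂ) * (1/3456) by norm_num, C_mul, map_ofNat]

lemma hc_5_8 : C ((5/8 : ℂ)) = (2160 : Cw) * C ((1/3456 : ℂ)) := by
  rw [show ((5/8 : ℂ)) = (2160 : ℂ) * (1/3456) by norm_num, C_mul, map_ofNat]

lemma hc_2_3 : C ((2/3 : ℂ)) = (2304 : Cw) * C ((1/3456 : ℂ)) := by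
  rw [show ((2/3 : ℂ)) = (2304 : ℂ) * (1/3456) by norm_num, C_mul, map_ofNat]

lemma hc_17_24 : C ((17/24 : ℂ)) = (2448 : Cw) * C ((1/3456 : ℂ)) := by
  rw [show ((17/24 : ℂ)) = (2448 : ℂ) * (1/3456) by norm_num, C_mul, map_ofNat]

lemma hc_3_4 : C ((3/4 : ℂ)) = (2592 : Cw) * C ((1/3456 : ℂ)) := by
  rw [show ((3/4 : ℂ)) = (2592 : ℂ) * (1/3456) by norm_num, C_mul, map_ofNat]

lemma hc_35_32 : C ((35/32 : ℂ)) = (3780 : Cw) * C ((1/3456 : ℂ)) := by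
  rw [show ((35/32 : ℂ)) = (3780 : ℂ) * (1/3456) by norm_num, C_mul, map_ofNat]

lemma hc_9_8 : C ((9/8 : ℂ)) = (3888 : Cw) * C ((1/3456 : ℂ)) := by
  rw [show ((9/8 : ℂ)) = (3888 : ℂ) * (1/3456) by norm_num, C_mul, map_ofNat]

lemma hc_115_96 : C ((115/96 : ℂ)) = (4140 : Cw) * C ((1/3456 : ℂ)) := by
  rw [show ((115/96 : ℂ)) = (4140 : ℂ) * (1/3456) by norm_num, C_mul, map_ofNat]

lemma hc_4_3 : C ((4/3 : ℂ)) = (4608 : Cw) * C ((1/3456 : ℂ)) := by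
  rw [show ((4/3 : ℂ)) = (4608 : ℂ) * (1/3456) by norm_num, C_mul, map_ofNat]

lemma hc_3_2 : C ((3/2 : ℂ)) = (5184 : Cw) * C ((1/3456 : ℂ)) := by
  rw [show ((3/2 : ℂ)) = (5184 : ℂ) * (1/3456) by norm_num, C_mul, map_ofNat]

lemma hc_19_8 : C ((19/8 : ℂ)) = (8208 : Cw) * C ((1/3456 : ℂ)) := by
  rw [show ((19/8 : ℂ)) = (8208 : ℂ) * (1/3456) by norm_num, C_mul, map_ofNat]

lemma hc_25_6 : C ((25/6 : ℂ)) = (14400 : Cw) * C ((1/3456 : ℂ)) := by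
  rw [show ((25/6 : ℂ)) = (14400 : ℂ) * (1/3456) by norm_num, C_mul, map_ofNat]

lemma hc_9_2 : C ((9/2 : ℂ)) = (15552 : Cw) * C ((1/3456 : ℂ)) := by
  rw [show ((9/2 : ℂ)) = (15552 : ℂ) * (1/3456) by norm_num, C_mul, map_ofNat]

lemma hc_16_3 : C ((16/3 : ℂ)) = (18432 : Cw) * C ((1/3456 : ℂ)) := by
  rw [show ((16/3 : ℂ)) = (18432 : ℂ) * (1/3456) by norm_num, C_mul, map_ofNat]

lemma hc_27_4 : C ((27/4 : ℂ)) = (23328 : Cw) * C ((1/3456 : ℂ)) := by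
  rw [show ((27/4 : ℂ)) = (23328 : ℂ) * (1/3456) by norm_num, C_mul, map_ofNat]

lemma hc_15_2 : C ((15/2 : ℂ)) = (25920 : Cw) * C ((1/3456 : ℂ)) := by
  rw [show ((15/2 : ℂ)) = (25920 : ℂ) * (1/3456) by norm_num, C_mul, map_ofNat]

lemma hc_31_4 : C ((31/4 : ℂ)) = (26784 : Cw) * C ((1/3456 : ℂ)) := by
  rw [show ((31/4 : ℂ)) = (26784 : ℂ) * (1/3456) by norm_num, C_mul, map_ofNat]

lemma hc_75_8 : C ((75/8 : ℂ)) = (32400 : Cw) * C ((1/3456 : ℂ)) := by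
  rw [show ((75/8 : ℂ)) = (32400 : ℂ) * (1/3456) by norm_num, C_mul, map_ofNat]

lemma hc_19_2 : C ((19/2 : ℂ)) = (32832 : Cw) * C ((1/3456 : ℂ)) := by
  rw [show ((19/2 : ℂ)) = (32832 : ℂ) * (1/3456) by norm_num, C_mul, map_ofNat]

lemma hc_32_3 : C ((32/3 : ℂ)) = (36864 : Cw) * C ((1/3456 : ℂ)) := by
  rw [show ((32/3 : ℂ)) = (36864 : ℂ) * (1/3456) by norm_num, C_mul, map_ofNat]

lemma hc_25_2 : C ((25/2 : ℂ)) = (43200 : Cw) * C ((1/3456 : ℂ)) := by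
  rw [show ((25/2 : ℂ)) = (43200 : ℂ) * (1/3456) by norm_num, C_mul, map_ofNat]

lemma hc_45_2 : C ((45/2 : ℂ)) = (77760 : Cw) * C ((1/3456 : ℂ)) := by
  rw [show ((45/2 : ℂ)) = (77760 : ℂ) * (1/3456) by norm_num, C_mul, map_ofNat]

lemma hc_137_4 : C ((137/4 : ℂ)) = (118368 : Cw) * C ((1/3456 : ℂ)) := by
  rw [show ((137/4 : ℂ)) = (118368 : ℂ) * (1/3456) by norm_num, C_mul, map_ofNat]

lemma hc_1123_8 : C ((1123/8 : ℂ)) = (485136 : Cw) * C ((1/3456 : ℂ)) := by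
  rw [show ((1123/8 : ℂ)) = (485136 : ℂ) * (1/3456) by norm_num, C_mul, map_ofNat]

lemma hc_424_3 : C ((424/3 : ℂ)) = (488448 : Cw) * C ((1/3456 : ℂ)) := by
  rw [show ((424/3 : ℂ)) = (488448 : ℂ) * (1/3456) by norm_num, C_mul, map_ofNat]

lemma hc_1235_6 : C ((1235/6 : ℂ)) = (711360 : Cw) * C ((1/3456 : ℂ)) := by
  rw [show ((1235/6 : ℂ)) = (711360 : ℂ) * (1/3456) by norm_num, C_mul, map_ofNat]

lemma hc_477_2 : C ((477/2 : ℂ)) = (824256 : Cw) * C ((1/3456 : ℂ)) := by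
  rw [show ((477/2 : ℂ)) = (824256 : ℂ) * (1/3456) by norm_num, C_mul, map_ofNat]

lemma hc_1124_3 : C ((1124/3 : ℂ)) = (1294848 : Cw) * C ((1/3456 : ℂ)) := by
  rw [show ((1124/3 : ℂ)) = (1294848 : ℂ) * (1/3456) by norm_num, C_mul, map_ofNat]

lemma hc_855_2 : C ((855/2 : ℂ)) = (1477440 : Cw) * C ((1/3456 : ℂ)) := by
  rw [show ((855/2 : ℂ)) = (1477440 : ℂ) * (1/3456) by norm_num, C_mul, map_ofNat]

lemma hc_6975_8 : C ((6975/8 : ℂ)) = (3013200 : Cw) * C ((1/3456 : ℂ)) := by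
  rw [show ((6975/8 : ℂ)) = (3013200 : ℂ) * (1/3456) by norm_num, C_mul, map_ofNat]

lemma hc_112035_2 : C ((112035/2 : ℂ)) = (193596480 : Cw) * C ((1/3456 : ℂ)) := by
  rw [show ((112035/2 : ℂ)) = (193596480 : ℂ) * (1/3456) by norm_num, C_mul, map_ofNat]

def g1 : Cw :=
  2160 + -(C ((9/2 : ℂ)) * X 3) + -(C ((9/8 : ℂ)) * X 0)

def g2 : Cw :=
  17280 + -(72 * X 3) + -(C ((1/2 : ℂ)) * X 1) + -(66 * X 0)

def g3 : Cw :=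
  69120 + X 5 + 198 * X 4 + -(504 * X 3) + 18 * X 3 ^ 2 + -(C ((1/3 : ℂ)) * X 2) + -(C ((25/2 : ℂ)) * X 1) + -(2406 * X 0) + 3 * X 0 * X 3 + C ((1/8 : ℂ)) * X 0 ^ 2

def g4 : Cw :=
  483840 + -(C ((1/4 : ℂ)) * X 7) + -(C ((137/4 : ℂ)) * X 6) + 3985 * X 5 + 54450 * X 4 + C ((9/2 : ℂ)) * X 4 ^ 2 + -(7560 * X 3) + -(C ((19/2 : ℂ)) * X 3 * X 5) + C ((855/2 : ℂ)) * X 3 * X 4 + 5130 * X 3 ^ 2 + C ((45/2 : ℂ)) * X 3 ^ 3 + -(C ((1235/6 : ℂ)) * X 2) + C ((13/24 : ℂ)) * X 2 * X 3 + -(C ((112035/2 : ℂ)) * X 1) + C ((3/4 : ℂ)) * X 1 * X 4 + C ((1123/8 : ℂ)) * X 1 * X 3 + -(C ((1/32 : ℂ)) * X 1 ^ 2) + -(286650 * X 0) + -(C ((17/24 : ℂ)) * X 0 * X 5) + -(C ((9/8 : ℂ)) * X 0 * X 4) + -(4305 * X 0 * X 3) + C ((75/8 : ℂ)) * X 0 *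 X 3 ^ 2 + C ((59/288 : ℂ)) * X 0 * X 2 + -(C ((115/96 : ℂ)) * X 0 * X 1) + -(C ((6975/8 : ℂ)) * X 0 ^ 2) + C ((35/32 : ℂ)) * X 0 ^ 2 * X 3 + C ((31/384 : ℂ)) * X 0 ^ 3

def g5 : Cw :=
  241920 + -(C ((1/4 : ℂ)) * X 6) + -(5 * X 5) + -(720 * X 4) + -(2520 * X 3) + -(90 * X 3 ^ 2) + C ((25/6 : ℂ)) * X 2 + -(1660 * X 1) + C ((19/8 : ℂ)) * X 1 * X 3 + -(21750 * X 0) + -(C ((3/2 : ℂ)) * X 0 * X 4) + -(105 * X 0 * X 3) + C ((5/96 : ℂ)) * X 0 * X 1 + -(C ((5/8 : ℂ)) * X 0 ^ 2)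

def g6 : Cw :=
  60480 + -(C ((1/4 : ℂ)) * X 5) + -(72 * X 4) + -(378 * X 3) + -(C ((27/4 : ℂ)) * X 3 ^ 2) + C ((1/48 : ℂ)) * X 2 + -(C ((15/2 : ℂ)) * X 1) + -(C ((477/2 : ℂ)) * X 0) + -(C ((3/8 : ℂ)) * X 0 * X 3) + C ((9/64 : ℂ)) * X 0 ^ 2

def g7 : Cw :=
  6720 + -(C ((1/4 : ℂ)) * X 4) + -(21 * X 3) + C ((1/48 : ℂ)) * X 1 + C ((31/4 : ℂ)) * X 0

def g8 : Cw :=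
  240 + -(C ((1/4 : ℂ)) * X 3) + C ((1/48 : ℂ)) * X 0

def h1 : Cw :=
  -(1440) + 12 * X 7 + -(C ((2/3 : ℂ)) * X 0)

def h2 : Cw :=
  103680 + -(1152 * X 7) + -(2 * X 1) + 96 * X 0

def h3 : Cw :=
  -(2073600) + 41472 * X 7 + -(144 * X 7 ^ 2) + 1440 * X 6 + -(16 * X 5) + -(4 * X 2) + 400 * X 1 + 1728 * X 0 + -(48 * X 0 * X 7) + C ((4/3 : ℂ)) * X 0 ^ 2

def h4 : Cw :=
  840 + -(3 * X 7) + -(C ((1/18 : ℂ)) * X 0)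

def h5 : Cw :=
  -(79680) + 528 * X 7 + -(4 * X 6) + -(C ((1/6 : ℂ)) * X 1) + -(8 * X 0)

def h6 : Cw :=
  3939840 + -(25920 * X 7) + -(120 * X 7 ^ 2) + 1272 * X 6 + -(C ((16/3 : ℂ)) * X 5) + -(C ((1/3 : ℂ)) * X 2) + C ((424/3 : ℂ)) * X 1 + 4608 * X 0 + -(24 * X 0 * X 7) + C ((2/9 : ℂ)) * X 0 ^ 2

def h7 : Cw :=
  -(97873920) + 933120 * X 7 + 3456 * X 7 ^ 2 + -(24480 * X 6) + 288 * X 6 * X 7 + -(160 * X 5) + -(4 * X 4) + -(60 * X 2) + 800 * X 1 + 64 * X 1 * X 7 + -(108480 * X 0) + -(16 * X 0 * X 6) + C ((2/3 : ℂ)) * X 0 * X 1 + -(96 * X 0 ^ 2)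

def h8 : Cw :=
  721612800 + -(104198400 * X 7) + 1714176 * X 7 ^ 2 + -(9792 * X 7 ^ 3) + -(8460000 * X 6) + 25632 * X 6 * X 7 + 288 * X 6 ^ 2 + 88320 * X 5 + -(480 * X 5 * X 7) + 548 * X 4 + -(4 * X 3) + 12920 * X 2 + -(40 * X 2 * X 7) + -(1694400 * X 1) + 1884 * X 1 * X 7 + 48 * X 1 * X 6 + X 1 ^ 2 + -(30102720 * X 0) + 578688 * X 0 * X 7 + -(2592 * X 0 * X 7 ^ 2) + 6688 * X 0 * X 6 + -(C ((32/3 : ℂ)) * X 0 * X 5) + C ((4/3 : ℂ)) * X 0 * X 2 + C ((1124/3 : ℂ)) * X 0 * X 1 + 24576 * X 0 ^ 2 + -(48 * X 0 ^ 2 * X 7) + -(C ((8/27 : ℂ)) * X 0 ^ 3)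

def pv : Fin 8 → Cw := ![a2_0, a3_0, a4_0, b2_0, b3_0, b4_0, b5_0, b6_0]

def gv : Fin 8 → Cw := ![g1, g2, g3, g4, g5, g6, g7, g8]

def hv : Fin 8 → Cw := ![h1, h2, h3, h4, h5, h6, h7, h8]

lemma pv0 : pv 0 = a2_0 := rfl
lemma pv1 : pv 1 = a3_0 := rfl
lemma pv2 : pv 2 = a4_0 := rfl
lemma pv3 : pv 3 = b2_0 := rfl
lemma pv4 : pv 4 = b3_0 := rfl
lemma pv5 : pv 5 = b4_0 := rfl
lemma pv6 : pv 6 = b5_0 := rfl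
lemma pv7 : pv 7 = b6_0 := rfl
lemma gv0 : gv 0 = g1 := rfl
lemma gv1 : gv 1 = g2 := rfl
lemma gv2 : gv 2 = g3 := rfl
lemma gv3 : gv 3 = g4 := rfl
lemma gv4 : gv 4 = g5 := rfl
lemma gv5 : gv 5 = g6 := rfl
lemma gv6 : gv 6 = g7 := rfl
lemma gv7 : gv 7 = g8 := rfl

set_option maxHeartbeats 2000000 in
lemma kP0 : aeval pv g1 = X 0 := by
  simp only [g1, g2, g3, g4, g5, g6, g7, g8, h1, h2, h3, h4, h5, h6, h7, h8, pv0, pv1, pv2, pv3, pv4, pv5, pv6, pv7, gv0, gv1, gv2, gv3, gv4, gv5, gv6, gv7, a2_0, a3_0, a4_0, b2_0, b3_0, b4_0, b5_0, b6_0, w1, w2, w3, w4, w5, w6, w7, w8, map_add, map_sub, map_mul, map_neg, map_pow, map_ofNat, map_one, aeval_X, aeval_C, algebraMap_eq, hc_1_48, hc_1_32, hc_5_96, hc_1_18, hc_31_384, hc_1_8, hc_9_64, hc_1_6, hc_59_288, hc_2_9, hc_1_4, hc_8_27, hc_1_3, hc_3_8, hc_1_2, hc_13_24, hc_5_8, hc_2_3,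 hc_17_24, hc_3_4, hc_35_32, hc_9_8, hc_115_96, hc_4_3, hc_3_2, hc_19_8, hc_25_6, hc_9_2, hc_16_3, hc_27_4, hc_15_2, hc_31_4, hc_75_8, hc_19_2, hc_32_3, hc_25_2, hc_45_2, hc_137_4, hc_1123_8, hc_424_3, hc_1235_6, hc_477_2, hc_1124_3, hc_855_2, hc_6975_8, hc_112035_2]
  linear_combination (-(2160) + X 0 + 3456 * X 0 * C ((1/3456 : ℂ))) * hu

set_option maxHeartbeats 2000000 in
lemma kP1 : aeval pv g2 = X 1 := by
  simp only [g1, g2, g3, g4, g5, g6, g7, g8, h1, h2, h3, h4, h5, h6, h7, h8, pv0, pv1, pv2, pv3, pv4, pv5, pv6, pv7, gv0, gv1, gv2, gv3, gv4, gv5, gv6, gv7, a2_0, a3_0, a4_0, b2_0, b3_0, b4_0, b5_0, b6_0, w1, w2, w3, w4, w5, w6, w7, w8, map_add, map_sub, map_mul, map_neg, map_pow, map_ofNat, map_one, aeval_X, aeval_C, algebraMap_eq, hc_1_48, hc_1_32, hc_5_96, hc_1_18, hc_31_384, hc_1_8, hc_9_64, hc_1_6, hc_59_288, hc_2_9, hc_1_4,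 hc_8_27, hc_1_3, hc_3_8, hc_1_2, hc_13_24, hc_5_8, hc_2_3, hc_17_24, hc_3_4, hc_35_32, hc_9_8, hc_115_96, hc_4_3, hc_3_2, hc_19_8, hc_25_6, hc_9_2, hc_16_3, hc_27_4, hc_15_2, hc_31_4, hc_75_8, hc_19_2, hc_32_3, hc_25_2, hc_45_2, hc_137_4, hc_1123_8, hc_424_3, hc_1235_6, hc_477_2, hc_1124_3, hc_855_2, hc_6975_8, hc_112035_2]
  linear_combination (-(51840) + 576 * X 7 + X 1) * hu

set_option maxHeartbeats 2000000 in
lemma kP2 : aeval pv g3 = X 2 := by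
  simp only [g1, g2, g3, g4, g5, g6, g7, g8, h1, h2, h3, h4, h5, h6, h7, h8, pv0, pv1, pv2, pv3, pv4, pv5, pv6, pv7, gv0, gv1, gv2, gv3, gv4, gv5, gv6, gv7, a2_0, a3_0, a4_0, b2_0, b3_0, b4_0, b5_0, b6_0, w1, w2, w3, w4, w5, w6, w7, w8, map_add, map_sub, map_mul, map_neg, map_pow, map_ofNat, map_one, aeval_X, aeval_C, algebraMap_eq, hc_1_48, hc_1_32, hc_5_96, hc_1_18, hc_31_384, hc_1_8, hc_9_64, hc_1_6, hc_59_288, hc_2_9, hc_1_4, hc_8_27, hc_1_3, hc_3_8, hc_1_2, hc_13_24, hc_5_8, hc_2_3, hc_17_24, hc_3_4, hc_35_32, hc_9_8, hc_115_96, hc_4_3, hc_3_2, hc_19_8, hc_25_6, hc_9_2, hc_16_3, hc_27_4, hc_15_2, hc_31_4, hc_75_8, hc_19_2, hc_32_3, hc_25_2, hc_45_2, hc_137_4, hc_1123_8, hc_424_3, hc_1235_6, hc_477_2, hc_1124_3, hc_855_2, hc_6975_8, hc_112035_2]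
  linear_combination (-(345600) + -(3744 * X 7) + 66 * X 7 ^ 2 + -(480 * X 6) + X 2 + -(3024 * X 0) + 829440 * X 0 * C ((1/3456 : ℂ)) + 24 * X 0 * X 7 + -(6912 * X 0 * X 7 * C ((1/3456 : ℂ))) + -(768 * X 0 ^ 2 * C ((1/3456 : ℂ))) + 663552 * X 0 ^ 2 * C ((1/3456 : ℂ)) ^ 2) * hu

set_option maxHeartbeats 2000000 in
lemma kP3 : aeval pv g4 = X 3 := by
  simp only [g1, g2, g3, g4, g5, g6, g7, g8, h1, h2, h3, h4, h5, h6, h7, h8, pv0, pv1, pv2, pv3, pv4, pv5, pv6, pv7, gv0, gv1, gv2, gv3, gv4, gv5, gv6, gv7, a2_0, a3_0, a4_0, b2_0, b3_0, b4_0, b5_0, b6_0, w1, w2, w3, w4, w5, w6, w7, w8, map_add, map_sub, map_mul, map_neg, map_pow, map_ofNat, map_one, aeval_X, aeval_C, algebraMap_eq, hc_1_48, hc_1_32, hc_5_96, hc_1_18, hc_31_384, hc_1_8, hc_9_64, hc_1_6, hc_59_288, hc_2_9, hc_1_4, hc_8_27, hc_1_3, hc_3_8, hc_1_2, hc_13_24,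 hc_5_8, hc_2_3, hc_17_24, hc_3_4, hc_35_32, hc_9_8, hc_115_96, hc_4_3, hc_3_2, hc_19_8, hc_25_6, hc_9_2, hc_16_3, hc_27_4, hc_15_2, hc_31_4, hc_75_8, hc_19_2, hc_32_3, hc_25_2, hc_45_2, hc_137_4, hc_1123_8, hc_424_3, hc_1235_6, hc_477_2, hc_1124_3, hc_855_2, hc_6975_8, hc_112035_2]
  linear_combination (-(20595651840) + 165805920 * X 7 + 277050 * X 7 ^ 2 + -(4851120 * X 6) + 128286720 * X 5 * C ((1/3456 : ℂ)) + -(368640 * X 5 * X 7 * C ((1/3456 : ℂ))) + X 3 + 8017920 * X 2 * C ((1/3456 : ℂ)) + -(23040 * X 2 * X 7 * C ((1/3456 : ℂ))) + -(3239101440 * X 1 * C ((1/3456 : ℂ))) + 8275968 * X 1 * X 7 * C ((1/3456 : ℂ)) + 20736 * X 1 * X 6 * C ((1/3456 : ℂ)) + 1296 * X 1 ^ 2 * C ((1/3456 : ℂ)) + 1492992 * X 1 ^ 2 * C ((1/3456 : ℂ)) ^ 2 + -(17927280 * X 0) + -(2676602880 * X 0 * C ((1/3456 : ℂ))) + 95640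 * X 0 * X 7 + -(3048192 * X 0 * X 7 * C ((1/3456 : ℂ))) + -(442368 * X 0 * X 7 ^ 2 * C ((1/3456 : ℂ))) + 3884544 * X 0 * X 6 * C ((1/3456 : ℂ)) + -(63700992 * X 0 * X 5 * C ((1/3456 : ℂ)) ^ 2) + -(3981312 * X 0 * X 2 * C ((1/3456 : ℂ)) ^ 2) + -(82944 * X 0 * X 1 * C ((1/3456 : ℂ))) + 1733861376 * X 0 * X 1 * C ((1/3456 : ℂ)) ^ 2 + 8800512 * X 0 ^ 2 * C ((1/3456 : ℂ)) + 5563883520 * X 0 ^ 2 * C ((1/3456 : ℂ)) ^ 2 + -(41472 * X 0 ^ 2 * X 7 * C ((1/3456 : ℂ))) + -(18579456 * X 0 ^ 2 * X 7 * C ((1/3456 : ℂ)) ^ 2) + -(884736 * X 0 ^ 3 * C ((1/3456 : ℂ)) ^ 2) + -(3057647616 * X 0 ^ 3 * C ((1/3456 : ℂ)) ^ 3)) * hu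

set_option maxHeartbeats 2000000 in
lemma kP4 : aeval pv g5 = X 4 := by
  simp only [g1, g2, g3, g4, g5, g6, g7, g8, h1, h2, h3, h4, h5, h6, h7, h8, pv0, pv1, pv2, pv3, pv4, pv5, pv6, pv7, gv0, gv1, gv2, gv3, gv4, gv5, gv6, gv7, a2_0, a3_0, a4_0, b2_0, b3_0, b4_0, b5_0, b6_0, w1, w2, w3, w4, w5, w6, w7, w8, map_add, map_sub, map_mul, map_neg, map_pow, map_ofNat, map_one, aeval_X, aeval_C, algebraMap_eq, hc_1_48, hc_1_32, hc_5_96, hc_1_18, hc_31_384, hc_1_8, hc_9_64, hc_1_6, hc_59_288, hc_2_9, hc_1_4, hc_8_27, hc_1_3, hc_3_8, hc_1_2, hc_13_24, hc_5_8, hc_2_3, hc_17_24, hc_3_4, hc_35_32, hc_9_8, hc_115_96, hc_4_3, hc_3_2, hc_19_8, hc_25_6, hc_9_2, hc_16_3, hc_27_4, hc_15_2, hc_31_4, hc_75_8, hc_19_2, hc_32_3, hc_25_2, hc_45_2, hc_137_4, hc_1123_8, hc_424_3, hc_1235_6, hc_477_2, hc_1124_3, hc_855_2, hc_6975_8, 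hc_112035_2]
  linear_combination (41489280 + -(349920 * X 7) + -(3570 * X 7 ^ 2) + 3480 * X 6 + X 4 + -(3320 * X 1) + -(1244160 * X 1 * C ((1/3456 : ℂ))) + 10368 * X 1 * X 7 * C ((1/3456 : ℂ)) + 176640 * X 0 + -(339240960 * X 0 * C ((1/3456 : ℂ))) + -(120 * X 0 * X 7) + 2522880 * X 0 * X 7 * C ((1/3456 : ℂ)) + -(13824 * X 0 * X 6 * C ((1/3456 : ℂ))) + -(1990656 * X 0 * X 1 * C ((1/3456 : ℂ)) ^ 2) + -(79104 * X 0 ^ 2 * C ((1/3456 : ℂ))) + -(3317760 * X 0 ^ 2 * C ((1/3456 : ℂ)) ^ 2)) * hu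

set_option maxHeartbeats 2000000 in
lemma kP5 : aeval pv g6 = X 5 := by
  simp only [g1, g2, g3, g4, g5, g6, g7, g8, h1, h2, h3, h4, h5, h6, h7, h8, pv0, pv1, pv2, pv3, pv4, pv5, pv6, pv7, gv0, gv1, gv2, gv3, gv4, gv5, gv6, gv7, a2_0, a3_0, a4_0, b2_0, b3_0, b4_0, b5_0, b6_0, w1, w2, w3, w4, w5, w6, w7, w8, map_add, map_sub, map_mul, map_neg, map_pow, map_ofNat, map_one, aeval_X, aeval_C, algebraMap_eq, hc_1_48, hc_1_32, hc_5_96, hc_1_18, hc_31_384, hc_1_8, hc_9_64, hc_1_6, hc_59_288, hc_2_9, hc_1_4, hc_8_27, hc_1_3, hc_3_8, hc_1_2, hc_13_24, hc_5_8, hc_2_3, hc_17_24, hc_3_4, hc_35_32, hc_9_8, hc_115_96, hc_4_3, hc_3_2, hc_19_8, hc_25_6, hc_9_2, hc_16_3, hc_27_4, hc_15_2, hc_31_4, hc_75_8, hc_19_2, hc_32_3, hc_25_2, hc_45_2, hc_137_4, hc_1123_8, hc_424_3, hc_1235_6, hc_477_2, hc_1124_3, hc_855_2, hc_6975_8, 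hc_112035_2]
  linear_combination (-(5479920) + 36882 * X 7 + -(288 * X 6) + X 5 + 4608 * X 5 * C ((1/3456 : ℂ)) + 288 * X 2 * C ((1/3456 : ℂ)) + -(122112 * X 1 * C ((1/3456 : ℂ))) + -(576 * X 0) + 4281984 * X 0 * C ((1/3456 : ℂ)) + -(17280 * X 0 * X 7 * C ((1/3456 : ℂ))) + 331776 * X 0 ^ 2 * C ((1/3456 : ℂ)) ^ 2) * hu

set_option maxHeartbeats 2000000 in
lemma kP6 : aeval pv g7 = X 6 := by
  simp only [g1, g2, g3, g4, g5, g6, g7, g8, h1, h2, h3, h4, h5, h6, h7, h8, pv0, pv1, pv2, pv3, pv4, pv5, pv6, pv7, gv0, gv1, gv2, gv3, gv4, gv5, gv6, gv7, a2_0, a3_0, a4_0, b2_0, b3_0, b4_0, b5_0, b6_0, w1, w2, w3, w4, w5, w6, w7, w8, map_add, map_sub, map_mul, map_neg, map_pow, map_ofNat, map_one, aeval_X, aeval_C, algebraMap_eq, hc_1_48, hc_1_32, hc_5_96, hc_1_18, hc_31_384, hc_1_8, hc_9_64, hc_1_6, hc_59_288, hc_2_9, hc_1_4, hc_8_27, hc_1_3,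 hc_3_8, hc_1_2, hc_13_24, hc_5_8, hc_2_3, hc_17_24, hc_3_4, hc_35_32, hc_9_8, hc_115_96, hc_4_3, hc_3_2, hc_19_8, hc_25_6, hc_9_2, hc_16_3, hc_27_4, hc_15_2, hc_31_4, hc_75_8, hc_19_2, hc_32_3, hc_25_2, hc_45_2, hc_137_4, hc_1123_8, hc_424_3, hc_1235_6, hc_477_2, hc_1124_3, hc_855_2, hc_6975_8, hc_112035_2]
  linear_combination (10920 + -(63 * X 7) + X 6 + 144 * X 1 * C ((1/3456 : ℂ)) + -(17856 * X 0 * C ((1/3456 : ℂ)))) * hu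

set_option maxHeartbeats 2000000 in
lemma kP7 : aeval pv g8 = X 7 := by
  simp only [g1, g2, g3, g4, g5, g6, g7, g8, h1, h2, h3, h4, h5, h6, h7, h8, pv0, pv1, pv2, pv3, pv4, pv5, pv6, pv7, gv0, gv1, gv2, gv3, gv4, gv5, gv6, gv7, a2_0, a3_0, a4_0, b2_0, b3_0, b4_0, b5_0, b6_0, w1, w2, w3, w4, w5, w6, w7, w8, map_add, map_sub, map_mul, map_neg, map_pow, map_ofNat, map_one, aeval_X, aeval_C, algebraMap_eq, hc_1_48, hc_1_32, hc_5_96, hc_1_18, hc_31_384, hc_1_8, hc_9_64, hc_1_6, hc_59_288, hc_2_9, hc_1_4, hc_8_27, hc_1_3, hc_3_8, hc_1_2, hc_13_24, hc_5_8, hc_2_3, hc_17_24, hc_3_4, hc_35_32, hc_9_8, hc_115_96, hc_4_3, hc_3_2, hc_19_8, hc_25_6, hc_9_2, hc_16_3, hc_27_4, hc_15_2, hc_31_4, hc_75_8, hc_19_2, hc_32_3, hc_25_2, hc_45_2, hc_137_4, hc_1123_8, hc_424_3, hc_1235_6, hc_477_2, hc_1124_3, hc_855_2, hc_6975_8, 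hc_112035_2]
  linear_combination (-(240) + X 7) * hu

set_option maxHeartbeats 2000000 in
lemma kG0 : aeval gv h1 = X 0 := by
  simp only [g1, g2, g3, g4, g5, g6, g7, g8, h1, h2, h3, h4, h5, h6, h7, h8, pv0, pv1, pv2, pv3, pv4, pv5, pv6, pv7, gv0, gv1, gv2, gv3, gv4, gv5, gv6, gv7, a2_0, a3_0, a4_0, b2_0, b3_0, b4_0, b5_0, b6_0, w1, w2, w3, w4, w5, w6, w7, w8, map_add, map_sub, map_mul, map_neg, map_pow, map_ofNat, map_one, aeval_X, aeval_C, algebraMap_eq, hc_1_48, hc_1_32, hc_5_96, hc_1_18, hc_31_384, hc_1_8, hc_9_64, hc_1_6, hc_59_288, hc_2_9, hc_1_4, hc_8_27, hc_1_3, hc_3_8, hc_1_2, hc_13_24, hc_5_8, hc_2_3, hc_17_24, hc_3_4, hc_35_32, hc_9_8, hc_115_96, hc_4_3, hc_3_2, hc_19_8, hc_25_6, hc_9_2, hc_16_3, hc_27_4, hc_15_2, hc_31_4, hc_75_8, hc_19_2, hc_32_3, hc_25_2, hc_45_2, hc_137_4, hc_1123_8, hc_424_3, hc_1235_6, hc_477_2,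 hc_1124_3, hc_855_2, hc_6975_8, hc_112035_2]
  linear_combination (-(1440) + 10368 * X 3 * C ((1/3456 : ℂ)) + X 0 + 2592 * X 0 * C ((1/3456 : ℂ))) * hu

set_option maxHeartbeats 2000000 in
lemma kG1 : aeval gv h2 = X 1 := by
  simp only [g1, g2, g3, g4, g5, g6, g7, g8, h1, h2, h3, h4, h5, h6, h7, h8, pv0, pv1, pv2, pv3, pv4, pv5, pv6, pv7, gv0, gv1, gv2, gv3, gv4, gv5, gv6, gv7, a2_0, a3_0, a4_0, b2_0, b3_0, b4_0, b5_0, b6_0, w1, w2, w3, w4, w5, w6, w7, w8, map_add, map_sub, map_mul, map_neg, map_pow, map_ofNat, map_one, aeval_X, aeval_C, algebraMap_eq, hc_1_48, hc_1_32, hc_5_96, hc_1_18, hc_31_384, hc_1_8, hc_9_64, hc_1_6, hc_59_288, hc_2_9, hc_1_4, hc_8_27, hc_1_3, hc_3_8, hc_1_2, hc_13_24, hc_5_8, hc_2_3, hc_17_24, hc_3_4, hc_35_32, hc_9_8, hc_115_96, hc_4_3, hc_3_2, hc_19_8, hc_25_6, hc_9_2, hc_16_3, hc_27_4, hc_15_2,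 hc_31_4, hc_75_8, hc_19_2, hc_32_3, hc_25_2, hc_45_2, hc_137_4, hc_1123_8, hc_424_3, hc_1235_6, hc_477_2, hc_1124_3, hc_855_2, hc_6975_8, hc_112035_2]
  linear_combination (-(144 * X 3) + X 1 + -(132 * X 0)) * hu

set_option maxHeartbeats 2000000 in
lemma kG2 : aeval gv h3 = X 2 := by
  simp only [g1, g2, g3, g4, g5, g6, g7, g8, h1, h2, h3, h4, h5, h6, h7, h8, pv0, pv1, pv2, pv3, pv4, pv5, pv6, pv7, gv0, gv1, gv2, gv3, gv4, gv5, gv6, gv7, a2_0, a3_0, a4_0, b2_0, b3_0, b4_0, b5_0, b6_0, w1, w2, w3, w4, w5, w6, w7, w8, map_add, map_sub, map_mul, map_neg, map_pow, map_ofNat, map_one, aeval_X, aeval_C, algebraMap_eq, hc_1_48, hc_1_32, hc_5_96, hc_1_18, hc_31_384, hc_1_8, hc_9_64, hc_1_6, hc_59_288, hc_2_9, hc_1_4, hc_8_27, hc_1_3, hc_3_8, hc_1_2, hc_13_24, hc_5_8, hc_2_3, hc_17_24, hc_3_4, hc_35_32, hc_9_8, hc_115_96, hc_4_3, hc_3_2,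 hc_19_8, hc_25_6, hc_9_2, hc_16_3, hc_27_4, hc_15_2, hc_31_4, hc_75_8, hc_19_2, hc_32_3, hc_25_2, hc_45_2, hc_137_4, hc_1123_8, hc_424_3, hc_1235_6, hc_477_2, hc_1124_3, hc_855_2, hc_6975_8, hc_112035_2]
  linear_combination (6220800 + 4 * X 5 + -(360 * X 4) + 50976 * X 3 + -(89579520 * X 3 * C ((1/3456 : ℂ))) + 72 * X 3 ^ 2 + -(124416 * X 3 ^ 2 * C ((1/3456 : ℂ))) + 322486272 * X 3 ^ 2 * C ((1/3456 : ℂ)) ^ 2 + X 2 + 16776 * X 0 + -(22394880 * X 0 * C ((1/3456 : ℂ))) + 12 * X 0 * X 3 + 20736 * X 0 * X 3 * C ((1/3456 : ℂ)) + 161243136 * X 0 * X 3 * C ((1/3456 : ℂ)) ^ 2 + 9504 * X 0 ^ 2 * C ((1/3456 : ℂ)) + 20155392 * X 0 ^ 2 * C ((1/3456 : ℂ)) ^ 2) * hu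

set_option maxHeartbeats 2000000 in
lemma kG3 : aeval gv h4 = X 3 := by
  simp only [g1, g2, g3, g4, g5, g6, g7, g8, h1, h2, h3, h4, h5, h6, h7, h8, pv0, pv1, pv2, pv3, pv4, pv5, pv6, pv7, gv0, gv1, gv2, gv3, gv4, gv5, gv6, gv7, a2_0, a3_0, a4_0, b2_0, b3_0, b4_0, b5_0, b6_0, w1, w2, w3, w4, w5, w6, w7, w8, map_add, map_sub, map_mul, map_neg, map_pow, map_ofNat, map_one, aeval_X, aeval_C, algebraMap_eq, hc_1_48, hc_1_32, hc_5_96, hc_1_18, hc_31_384, hc_1_8, hc_9_64, hc_1_6, hc_59_288, hc_2_9, hc_1_4, hc_8_27, hc_1_3, hc_3_8, hc_1_2, hc_13_24, hc_5_8, hc_2_3, hc_17_24, hc_3_4, hc_35_32, hc_9_8, hc_115_96, hc_4_3, hc_3_2, hc_19_8, hc_25_6, hc_9_2, hc_16_3, hc_27_4, hc_15_2, hc_31_4, hc_75_8, hc_19_2, hc_32_3, hc_25_2, hc_45_2, hc_137_4, hc_1123_8, hc_424_3, hc_1235_6, hc_477_2, hc_1124_3, hc_855_2, hc_6975_8, 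hc_112035_2]
  linear_combination (-(120) + X 3 + 864 * X 3 * C ((1/3456 : ℂ)) + 216 * X 0 * C ((1/3456 : ℂ))) * hu

set_option maxHeartbeats 2000000 in
lemma kG4 : aeval gv h5 = X 4 := by
  simp only [g1, g2, g3, g4, g5, g6, g7, g8, h1, h2, h3, h4, h5, h6, h7, h8, pv0, pv1, pv2, pv3, pv4, pv5, pv6, pv7, gv0, gv1, gv2, gv3, gv4, gv5, gv6, gv7, a2_0, a3_0, a4_0, b2_0, b3_0, b4_0, b5_0, b6_0, w1, w2, w3, w4, w5, w6, w7, w8, map_add, map_sub, map_mul, map_neg, map_pow, map_ofNat, map_one, aeval_X, aeval_C, algebraMap_eq, hc_1_48, hc_1_32, hc_5_96, hc_1_18, hc_31_384, hc_1_8, hc_9_64, hc_1_6, hc_59_288, hc_2_9, hc_1_4, hc_8_27, hc_1_3, hc_3_8, hc_1_2, hc_13_24, hc_5_8, hc_2_3, hc_17_24, hc_3_4, hc_35_32, hc_9_8, hc_115_96, hc_4_3, hc_3_2, hc_19_8, hc_25_6, hc_9_2, hc_16_3, hc_27_4, hc_15_2, hc_31_4, hc_75_8, hc_19_2, hc_32_3,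 hc_25_2, hc_45_2, hc_137_4, hc_1123_8, hc_424_3, hc_1235_6, hc_477_2, hc_1124_3, hc_855_2, hc_6975_8, hc_112035_2]
  linear_combination (-(2880) + X 4 + -(84 * X 3) + 288 * X 1 * C ((1/3456 : ℂ))) * hu

set_option maxHeartbeats 2000000 in
lemma kG5 : aeval gv h6 = X 5 := by
  simp only [g1, g2, g3, g4, g5, g6, g7, g8, h1, h2, h3, h4, h5, h6, h7, h8, pv0, pv1, pv2, pv3, pv4, pv5, pv6, pv7, gv0, gv1, gv2, gv3, gv4, gv5, gv6, gv7, a2_0, a3_0, a4_0, b2_0, b3_0, b4_0, b5_0, b6_0, w1, w2, w3, w4, w5, w6, w7, w8, map_add, map_sub, map_mul, map_neg, map_pow, map_ofNat, map_one, aeval_X, aeval_C, algebraMap_eq, hc_1_48, hc_1_32, hc_5_96, hc_1_18, hc_31_384, hc_1_8, hc_9_64, hc_1_6, hc_59_288, hc_2_9, hc_1_4, hc_8_27, hc_1_3, hc_3_8, hc_1_2, hc_13_24, hc_5_8, hc_2_3, hc_17_24, hc_3_4, hc_35_32, hc_9_8, hc_115_96, hc_4_3, hc_3_2, hc_19_8,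 hc_25_6, hc_9_2, hc_16_3, hc_27_4, hc_15_2, hc_31_4, hc_75_8, hc_19_2, hc_32_3, hc_25_2, hc_45_2, hc_137_4, hc_1123_8, hc_424_3, hc_1235_6, hc_477_2, hc_1124_3, hc_855_2, hc_6975_8, hc_112035_2]
  linear_combination (3133440 + X 5 + 4608 * X 5 * C ((1/3456 : ℂ)) + 26712 * X 3 + -(14929920 * X 3 * C ((1/3456 : ℂ))) + 20736 * X 3 ^ 2 * C ((1/3456 : ℂ)) + 53747712 * X 3 ^ 2 * C ((1/3456 : ℂ)) ^ 2 + -(91584 * X 1 * C ((1/3456 : ℂ))) + 663552 * X 0 * C ((1/3456 : ℂ)) + 3456 * X 0 * X 3 * C ((1/3456 : ℂ)) + 26873856 * X 0 * X 3 * C ((1/3456 : ℂ)) ^ 2 + 3359232 * X 0 ^ 2 * C ((1/3456 : ℂ)) ^ 2) * hu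

set_option maxHeartbeats 2000000 in
lemma kG6 : aeval gv h7 = X 6 := by
  simp only [g1, g2, g3, g4, g5, g6, g7, g8, h1, h2, h3, h4, h5, h6, h7, h8, pv0, pv1, pv2, pv3, pv4, pv5, pv6, pv7, gv0, gv1, gv2, gv3, gv4, gv5, gv6, gv7, a2_0, a3_0, a4_0, b2_0, b3_0, b4_0, b5_0, b6_0, w1, w2, w3, w4, w5, w6, w7, w8, map_add, map_sub, map_mul, map_neg, map_pow, map_ofNat, map_one, aeval_X, aeval_C, algebraMap_eq, hc_1_48, hc_1_32, hc_5_96, hc_1_18, hc_31_384, hc_1_8, hc_9_64, hc_1_6, hc_59_288, hc_2_9, hc_1_4, hc_8_27, hc_1_3, hc_3_8, hc_1_2, hc_13_24, hc_5_8, hc_2_3, hc_17_24, hc_3_4, hc_35_32, hc_9_8, hc_115_96, hc_4_3, hc_3_2, hc_19_8, hc_25_6, hc_9_2, hc_16_3, hc_27_4, hc_15_2, hc_31_4, hc_75_8, hc_19_2, hc_32_3, hc_25_2, hc_45_2, hc_137_4, hc_1123_8, hc_424_3, hc_1235_6, hc_477_2, hc_1124_3, hc_855_2, hc_6975_8, 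hc_112035_2]
  linear_combination (24883200 + X 6 + 40 * X 5 + -(2520 * X 4) + 1274400 * X 3 + -(179159040 * X 3 * C ((1/3456 : ℂ))) + 720 * X 3 ^ 2 + -(5225472 * X 3 ^ 2 * C ((1/3456 : ℂ))) + -(6640 * X 1) + -(2488320 * X 1 * C ((1/3456 : ℂ))) + 32832 * X 1 * X 3 * C ((1/3456 : ℂ)) + 17915904 * X 1 * X 3 * C ((1/3456 : ℂ)) ^ 2 + 835200 * X 0 + -(44789760 * X 0 * C ((1/3456 : ℂ))) + -(20736 * X 0 * X 4 * C ((1/3456 : ℂ))) + -(240 * X 0 * X 3) + -(2612736 * X 0 * X 3 * C ((1/3456 : ℂ))) + 720 * X 0 * X 1 * C ((1/3456 : ℂ)) + 4478976 * X 0 * X 1 * C ((1/3456 : ℂ)) ^ 2 + 399168 * X 0 ^ 2 * C ((1/3456 : ℂ))) * hu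

set_option maxHeartbeats 2000000 in
lemma kG7 : aeval gv h8 = X 7 := by
  simp only [g1, g2, g3, g4, g5, g6, g7, g8, h1, h2, h3, h4, h5, h6, h7, h8, pv0, pv1, pv2, pv3, pv4, pv5, pv6, pv7, gv0, gv1, gv2, gv3, gv4, gv5, gv6, gv7, a2_0, a3_0, a4_0, b2_0, b3_0, b4_0, b5_0, b6_0, w1, w2, w3, w4, w5, w6, w7, w8, map_add, map_sub, map_mul, map_neg, map_pow, map_ofNat, map_one, aeval_X, aeval_C, algebraMap_eq, hc_1_48, hc_1_32, hc_5_96, hc_1_18, hc_31_384, hc_1_8, hc_9_64, hc_1_6, hc_59_288, hc_2_9, hc_1_4, hc_8_27, hc_1_3, hc_3_8, hc_1_2, hc_13_24, hc_5_8, hc_2_3, hc_17_24, hc_3_4, hc_35_32, hc_9_8, hc_115_96, hc_4_3, hc_3_2, hc_19_8, hc_25_6, hc_9_2, hc_16_3, hc_27_4, hc_15_2, hc_31_4, hc_75_8, hc_19_2, hc_32_3, hc_25_2, hc_45_2, hc_137_4, hc_1123_8, hc_424_3, hc_1235_6, hc_477_2, hc_1124_3, hc_855_2, hc_6975_8, 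hc_112035_2]
  linear_combination (9803980800 + X 7 + 15360 * X 5 + 19906560 * X 5 * C ((1/3456 : ℂ)) + -(1980360 * X 4) + 62208 * X 4 ^ 2 * C ((1/3456 : ℂ)) + 282731040 * X 3 + -(27590492160 * X 3 * C ((1/3456 : ℂ))) + -(165888 * X 3 * X 5 * C ((1/3456 : ℂ))) + -(143327232 * X 3 * X 5 * C ((1/3456 : ℂ)) ^ 2) + 15489792 * X 3 * X 4 * C ((1/3456 : ℂ)) + -(194688 * X 3 ^ 2) + -(4071389184 * X 3 ^ 2 * C ((1/3456 : ℂ))) + -(464380231680 * X 3 ^ 2 * C ((1/3456 : ℂ)) ^ 2) + -(311040 * X 3 ^ 3 * C ((1/3456 : ℂ))) + 9889579008 * X 3 ^ 3 * C ((1/3456 : ℂ)) ^ 2 + 1114512556032 * X 3 ^ 3 * C ((1/3456 : ℂ)) ^ 3 + -(4976640 * X 2 * C ((1/3456 : ℂ))) + 7488 * X 2 * X 3 * C ((1/3456 : ℂ)) + 35831808 * X 2 * X 3 * C ((1/3456 : ℂ)) ^ 2 + 909680 * X 1 + -(925655040 * X 1 * C ((1/3456 : ℂ))) + 10368 * X 1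 * X 4 * C ((1/3456 : ℂ)) + -(3428352 * X 1 * X 3 * C ((1/3456 : ℂ))) + 6664716288 * X 1 * X 3 * C ((1/3456 : ℂ)) ^ 2 + -(432 * X 1 ^ 2 * C ((1/3456 : ℂ))) + -(39657600 * X 0) + 12093235200 * X 0 * C ((1/3456 : ℂ)) + -(6912 * X 0 * X 5 * C ((1/3456 : ℂ))) + -(35831808 * X 0 * X 5 * C ((1/3456 : ℂ)) ^ 2) + -(1829952 * X 0 * X 4 * C ((1/3456 : ℂ))) + -(45672 * X 0 * X 3) + -(342330624 * X 0 * X 3 * C ((1/3456 : ℂ))) + -(368924295168 * X 0 * X 3 * C ((1/3456 : ℂ)) ^ 2) + 77760 * X 0 * X 3 ^ 2 * C ((1/3456 : ℂ)) + 537477120 * X 0 * X 3 ^ 2 * C ((1/3456 : ℂ)) ^ 2 + 835884417024 * X 0 * X 3 ^ 2 * C ((1/3456 : ℂ)) ^ 3 + 2832 * X 0 * X 2 * C ((1/3456 : ℂ)) + 8957952 * X 0 * X 2 * C ((1/3456 : ℂ)) ^ 2 + -(115200 * X 0 * X 1 * C ((1/3456 : ℂ))) + 1666179072 * X 0 * X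 1 * C ((1/3456 : ℂ)) ^ 2 + -(4356 * X 0 ^ 2) + 72581184 * X 0 ^ 2 * C ((1/3456 : ℂ)) + -(63207309312 * X 0 ^ 2 * C ((1/3456 : ℂ)) ^ 2) + 23760 * X 0 ^ 2 * X 3 * C ((1/3456 : ℂ)) + -(125411328 * X 0 ^ 2 * X 3 * C ((1/3456 : ℂ)) ^ 2) + 208971104256 * X 0 ^ 2 * X 3 * C ((1/3456 : ℂ)) ^ 3 + 1116 * X 0 ^ 3 * C ((1/3456 : ℂ)) + 21897216 * X 0 ^ 3 * C ((1/3456 : ℂ)) ^ 2 + 17414258688 * X 0 ^ 3 * C ((1/3456 : ℂ)) ^ 3) * hu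

lemma key1 : (aeval pv).comp (aeval gv) = AlgHom.id ℂ Cw := by
  apply MvPolynomial.algHom_ext
  intro i
  fin_cases i <;>
    simp only [AlgHom.comp_apply, aeval_X, AlgHom.id_apply]
  exacts [kP0, kP1, kP2, kP3, kP4, kP5, kP6, kP7]

lemma key2 : (aeval gv).comp (aeval hv) = AlgHom.id ℂ Cw := by
  apply MvPolynomial.algHom_ext
  intro i
  fin_cases i <;>
    simp only [AlgHom.comp_apply, aeval_X, AlgHom.id_apply]
  exacts [kG0, kG1, kG2, kG3, kG4, kG5, kG6, kG7]

theorem ab0_algebraicIndependent :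
    AlgebraicIndependent ℂ
      ![a2_0, a3_0, a4_0, b2_0, b3_0, b4_0, b5_0, b6_0] := by
  rw [show ![a2_0, a3_0, a4_0, b2_0, b3_0, b4_0, b5_0, b6_0] = pv from rfl,
    algebraicIndependent_iff_injective_aeval]
  intro x y hxy
  obtain ⟨a, rfl⟩ : ∃ a, aeval gv a = x :=
    ⟨aeval hv x, by rw [← AlgHom.comp_apply, key2, AlgHom.id_apply]⟩
  obtain ⟨b, rfl⟩ : ∃ b, aeval gv b = y :=
    ⟨aeval hv y, by rw [← AlgHom.comp_apply, key2, AlgHom.id_apply]⟩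
  have h2 : aeval pv (aeval gv a) = aeval pv (aeval gv b) := hxy
  rw [← AlgHom.comp_apply, ← AlgHom.comp_apply, key1, AlgHom.id_apply, AlgHom.id_apply] at h2
  rw [h2]

end E8JacobiQ0
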